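/- (Lusin-type approximation under capacity.) Let $\Omega$ be a separable metric space, $\mathcal{C}$ a capacity on $\Omega$ (i.e. $\mathcal{C}[A] = \sup_{\mathbb{P}\in\mathcal{P}}\mathbb{P}[A]$ for a family $\mathcal{P}$ of Borel probability measures) satisfying: for any sequence of open sets $\Omega_n \uparrow \Omega$, $\mathcal{C}[\Omega_n^c] \downarrow 0$. Let $\underline\theta \le \theta \le \overline\theta$ be maps from $\Omega$ to a compact interval $I\subset\mathbb{R}$ such that for some set $\Omega_0\subset\Omega$ and $\delta>0$: $\underline\theta(\omega) \le \theta(\omega') \le \overline\theta(\omega)$ whenever $\omega\in\Omega_0$ and $d(\omega,\omega')\le\delta$. Then for every $\varepsilon>0$ there exists a uniformly continuous function $\hat\theta:\Omega\to I$ and an open set $\Omega_\varepsilon\subset\Omega$ with $\mathcal{C}[\Omega_\varepsilon^c]\le\varepsilon$ and $\underline\theta - \varepsilon \le \hat\theta \le \overline\theta + \varepsilon$ on $\Omega_\varepsilon\cap\Omega_0$. -/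

import Mathlib

open MeasureTheory Filter

private lemma lipschitz_inf' {Ω : Type*} [MetricSpace Ω] {K : NNReal} {f : ℕ → Ω → ℝ}
    (hf : ∀ j, LipschitzWith K (f j)) (n : ℕ) :
    LipschitzWith K (fun ω => (Finset.range (n + 1)).inf' (by simp) (fun j => f j ω)) := by
  induction n with
  | zero => simpa using hf 0
  | succ n ih =>
      have : (fun ω => (Finset.range (n + 2)).inf' (by simp) (fun j => f j ω))
          = fun ω => min (f (n + 1) ω)
            ((Finset.range (n + 1)).inf' (by simp) (fun j => f j ω)) := by
        funext ω
        simp only [Finset.range_add_one]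
        rw [Finset.inf'_insert]
      rw [this]
      simpa using (hf (n + 1)).min ih

/-- Lusin-type approximation under a capacity `C[A] = sup_{P ∈ 𝔓} P[A]`
satisfying the continuity property for increasing sequences of open sets. -/
theorem statement3 {Ω : Type*} [MetricSpace Ω] [TopologicalSpace.SeparableSpace Ω]
    [MeasurableSpace Ω] [BorelSpace Ω]
    (𝔓 : Set (Measure Ω)) (hprob : ∀ P ∈ 𝔓, IsProbabilityMeasure P)
    (hcap : ∀ U : ℕ → Set Ω, (∀ n, IsOpen (U n)) → Monotone U → (⋃ n, U n) = Set.univ →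
      Tendsto (fun n => ⨆ P ∈ 𝔓, P ((U n)ᶜ)) atTop (nhds 0))
    (a b : ℝ) (hab : a ≤ b) (Ω₀ : Set Ω) (δ : ℝ) (hδ : 0 < δ)
    (θ θl θu : Ω → ℝ)
    (hθI : ∀ ω, θ ω ∈ Set.Icc a b) (hθlI : ∀ ω, θl ω ∈ Set.Icc a b)
    (hθuI : ∀ ω, θu ω ∈ Set.Icc a b)
    (hle : ∀ ω, θl ω ≤ θ ω ∧ θ ω ≤ θu ω)
    (hsand : ∀ ω ∈ Ω₀, ∀ ω', dist ω ω' ≤ δ → θl ω ≤ θ ω' ∧ θ ω' ≤ θu ω)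
    (ε : ℝ) (hε : 0 < ε) :
    ∃ (θh : Ω → ℝ) (Ωε : Set Ω), IsOpen Ωε ∧ UniformContinuous θh ∧
      (∀ ω, θh ω ∈ Set.Icc a b) ∧
      (⨆ P ∈ 𝔓, P (Ωεᶜ)) ≤ ENNReal.ofReal ε ∧
      (∀ ω ∈ Ωε ∩ Ω₀, θl ω - ε ≤ θh ω ∧ θh ω ≤ θu ω + ε) := by
  rcases isEmpty_or_nonempty Ω with hΩ | hΩ
  · refine ⟨fun _ => a, Set.univ, isOpen_univ, uniformContinuous_const,
      fun ω => (hΩ.false ω).elim, ?_, fun ω => (hΩ.false ω).elim⟩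
    simp
  -- constants
  set K : ℝ := (b - a + 1) / δ with hK
  have hK0 : 0 < K := div_pos (by linarith) hδ
  set r : ℝ := min δ (ε / K) with hr
  have hr0 : 0 < r := lt_min hδ (div_pos hε hK0)
  have hrδ : r ≤ δ := min_le_left _ _
  have hKr : K * r ≤ ε := by
    have : r ≤ ε / K := min_le_right _ _
    calc K * r ≤ K * (ε / K) := by nlinarith
    _ = ε := by field_simp
  -- dense sequence
  obtain ⟨u, hu⟩ := TopologicalSpace.exists_dense_seq Ω
  -- increasing open cover
  set U : ℕ → Set Ω := fun n => ⋃ j ∈ Finset.range (n + 1), Metric.ball (u j) r with hU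
  have hUopen : ∀ n, IsOpen (U n) := fun n =>
    isOpen_biUnion fun j _ => Metric.isOpen_ball
  have hUmono : Monotone U := by
    intro m n hmn ω hω
    simp only [hU, Set.mem_iUnion] at hω ⊢
    obtain ⟨j, hj, hωj⟩ := hω
    exact ⟨j, by simp only [Finset.mem_range] at hj ⊢; omega, hωj⟩
  have hUuniv : (⋃ n, U n) = Set.univ := by
    apply Set.eq_univ_of_forall
    intro ω
    obtain ⟨j, hj⟩ := Metric.denseRange_iff.mp hu ω r hr0
    refine Set.mem_iUnion.mpr ⟨j, ?_⟩
    simp only [hU, Set.mem_iUnion]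
    exact ⟨j, Finset.mem_range.mpr (Nat.lt_succ_self j), by
      simpa [Metric.mem_ball, dist_comm] using hj⟩
  -- choose n
  have htend := hcap U hUopen hUmono hUuniv
  have hev : ∀ᶠ n in atTop, (⨆ P ∈ 𝔓, P ((U n)ᶜ)) < ENNReal.ofReal ε :=
    htend.eventually_lt_const (by simpa using ENNReal.ofReal_pos.mpr hε)
  obtain ⟨n, hn⟩ := hev.exists
  -- define θh
  set KN : NNReal := ⟨K, hK0.le⟩ with hKN
  set f : ℕ → Ω → ℝ := fun j ω => θ (u j) + K * dist ω (u j) with hf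
  have hflip : ∀ j, LipschitzWith KN (f j) := by
    intro j
    have hmul : LipschitzWith KN (fun ω => K * dist ω (u j)) := by
      apply LipschitzWith.of_dist_le_mul
      intro x y
      rw [Real.dist_eq, ← mul_sub, abs_mul, abs_of_nonneg hK0.le]
      have habs : |dist x (u j) - dist y (u j)| ≤ dist x y := abs_dist_sub_le x y (u j)
      have : (KN : ℝ) = K := rfl
      rw [this]
      nlinarith [dist_nonneg (x := x) (y := y)]
    have hadd := (LipschitzWith.const' (θ (u j)) (K := 0)).add hmul
    simpa [hf] using hadd
  set θh : Ω → ℝ := fun ω =>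
    min b ((Finset.range (n + 1)).inf' (by simp) (fun j => f j ω)) with hθh
  have hθhlip : LipschitzWith KN θh := by
    have := (lipschitz_inf' hflip n).const_min b
    simpa [hθh] using this
  have hinf_le : ∀ ω, ∀ j ∈ Finset.range (n + 1),
      (Finset.range (n + 1)).inf' (by simp) (fun j => f j ω) ≤ f j ω := by
    intro ω j hj
    exact Finset.inf'_le _ hj
  have hθub : ∀ ω, θh ω ∈ Set.Icc a b := by
    intro ω
    constructor
    · apply le_min hab
      apply Finset.le_inf'
      intro j _
      have := (hθI (u j)).1
      have := mul_nonneg hK0.le dist_nonneg (a := K) (b := dist ω (u j))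
      simp only [hf]; linarith
    · exact min_le_left _ _
  refine ⟨θh, U n, hUopen n, hθhlip.uniformContinuous, hθub, hn.le, ?_⟩
  rintro ω ⟨hωU, hωΩ₀⟩
  simp only [hU, Set.mem_iUnion] at hωU
  obtain ⟨j, hj, hωj⟩ := hωU
  have hdist : dist ω (u j) < r := Metric.mem_ball.mp hωj
  constructor
  · -- lower bound
    have hb : θl ω ≤ b := (hθlI ω).2
    have : θl ω ≤ (Finset.range (n + 1)).inf' (by simp) (fun j => f j ω) := by
      apply Finset.le_inf'
      intro i _
      by_cases hcase : dist ω (u i) ≤ δ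
      · have := (hsand ω hωΩ₀ (u i) hcase).1
        have := mul_nonneg hK0.le dist_nonneg (a := K) (b := dist ω (u i))
        simp only [hf]; linarith
      · push_neg at hcase
        have h1 : (hθI (u i)).1 = (hθI (u i)).1 := rfl
        have ha : a ≤ θ (u i) := (hθI (u i)).1
        have : K * δ ≤ K * dist ω (u i) := by nlinarith
        have hKδ : K * δ = b - a + 1 := by rw [hK, div_mul_cancel₀ _ hδ.ne']
        simp only [hf]; linarith
    have : θl ω ≤ θh ω := le_min hb this
    linarith
  · -- upper bound
    have h1 : θh ω ≤ f j ω := le_trans (min_le_right _ _) (hinf_le ω j hj)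
    have h2 : θ (u j) ≤ θu ω := (hsand ω hωΩ₀ (u j) (le_trans hdist.le hrδ)).2
    have h3 : K * dist ω (u j) ≤ K * r := by nlinarith
    simp only [hf] at h1
    linarith
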